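/- For any nonempty measurable set S ⊆ ℝ², 4·λ₂(S) ≤ λ₂(S − S), where S − S = {s₁ − s₂ : s₁, s₂ ∈ S}. -/

import Mathlib

open MeasureTheory Pointwise Set ENNReal

lemma preimage_sub_const_vol (B : Set ℝ) (c : ℝ) :
    volume ((fun x => x + c) ⁻¹' B) = volume B :=
  measure_preimage_add_right volume c B

lemma preimage_const_sub_vol (C : Set ℝ) (b : ℝ) :
    volume ((fun x => b - x) ⁻¹' C) = volume C := by
  have h : (fun x : ℝ => b - x) = (fun z => b + z) ∘ fun x => -x := by
    funext x; simp [Function.comp]; ring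
  rw [h, Set.preimage_comp, Measure.measure_preimage_neg, measure_preimage_add]

-- 1-D superadditivity: vol B + vol C ≤ vol (B - C)
lemma one_dim_sub (B C : Set ℝ) (hB : MeasurableSet B) (hC : MeasurableSet C)
    (hBne : B.Nonempty) (hCne : C.Nonempty) :
    volume B + volume C ≤ volume (B - C) := by
  obtain ⟨b₀, hb₀⟩ := hBne
  obtain ⟨c₀, hc₀⟩ := hCne
  have hBsub : ∀ c ∈ C, (fun x => x + c) ⁻¹' B ⊆ B - C := by
    intro c hc x hx
    exact ⟨x + c, hx, c, hc, by ring⟩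
  have hCsub : ∀ b ∈ B, (fun x => b - x) ⁻¹' C ⊆ B - C := by
    intro b hb x hx
    exact ⟨b, hb, b - x, hx, by ring⟩
  rcases eq_or_ne (volume B) ∞ with hBinf | hBfin
  · refine le_trans ?_ (measure_mono (hBsub c₀ hc₀))
    rw [preimage_sub_const_vol, hBinf]; simp
  rcases eq_or_ne (volume C) ∞ with hCinf | hCfin
  · refine le_trans ?_ (measure_mono (hCsub b₀ hb₀))
    rw [preimage_const_sub_vol, hCinf]; simp
  refine ENNReal.le_of_forall_pos_le_add fun ε hε hlt => ?_
  have hε2 : ((ε : ℝ≥0∞) / 2) ≠ 0 := by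
    simp [ENNReal.div_eq_zero_iff, hε.ne']
  obtain ⟨K, hKB, hKc, hKm⟩ := hB.exists_isCompact_lt_add hBfin hε2
  obtain ⟨L, hLC, hLc, hLm⟩ := hC.exists_isCompact_lt_add hCfin hε2
  set K' : Set ℝ := insert b₀ K with hK'
  set L' : Set ℝ := insert c₀ L with hL'
  have hK'c : IsCompact K' := hKc.insert b₀
  have hL'c : IsCompact L' := hLc.insert c₀
  have hK'B : K' ⊆ B := insert_subset hb₀ hKB
  have hL'C : L' ⊆ C := insert_subset hc₀ hLC
  have hK'ne : K'.Nonempty := ⟨b₀, mem_insert _ _⟩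
  have hL'ne : L'.Nonempty := ⟨c₀, mem_insert _ _⟩
  set k := sSup K' with hk
  set l := sSup L' with hl
  have hkK : k ∈ K' := hK'c.sSup_mem hK'ne
  have hlL : l ∈ L' := hL'c.sSup_mem hL'ne
  set U : Set ℝ := (fun x => x + l) ⁻¹' K' with hU
  set V : Set ℝ := (fun x => k - x) ⁻¹' L' with hV
  have hUsub : U ⊆ B - C := by
    intro x hx
    exact ⟨x + l, hK'B hx, l, hL'C hlL, by ring⟩
  have hVsub : V ⊆ B - C := by
    intro x hx
    exact ⟨k, hK'B hkK, k - x, hL'C hx, by ring⟩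
  have hUle : U ⊆ Iic (k - l) := by
    intro x hx
    have : x + l ≤ k := le_csSup hK'c.bddAbove hx
    simp only [mem_Iic]; linarith
  have hVge : V ⊆ Ici (k - l) := by
    intro x hx
    have : k - x ≤ l := le_csSup hL'c.bddAbove hx
    simp only [mem_Ici]; linarith
  have hUV : U ∩ V ⊆ {k - l} := by
    intro x hx
    have h1 := hUle hx.1
    have h2 := hVge hx.2
    simp only [mem_Iic] at h1; simp only [mem_Ici] at h2
    simp only [mem_singleton_iff]; linarith
  have hVm : MeasurableSet V :=
    hL'c.measurableSet.preimage (measurable_const.sub measurable_id)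
  have key : volume U + volume V ≤ volume (B - C) := by
    have h := measure_union_add_inter (μ := volume) U hVm
    have hUVnull : volume (U ∩ V) = 0 :=
      measure_mono_null hUV (measure_singleton _)
    calc volume U + volume V = volume (U ∪ V) + volume (U ∩ V) := h.symm
      _ = volume (U ∪ V) := by rw [hUVnull, add_zero]
      _ ≤ volume (B - C) := measure_mono (union_subset hUsub hVsub)
  have hvolU : volume U = volume K' := preimage_sub_const_vol K' l
  have hvolV : volume V = volume L' := preimage_const_sub_vol L' k
  have hBK : volume B ≤ volume K' + ε / 2 :=
    le_trans hKm.le (add_le_add_left (measure_mono (subset_insert _ _)) _)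
  have hCL : volume C ≤ volume L' + ε / 2 :=
    le_trans hLm.le (add_le_add_left (measure_mono (subset_insert _ _)) _)
  calc volume B + volume C ≤ (volume K' + ε / 2) + (volume L' + ε / 2) := add_le_add hBK hCL
    _ = (volume K' + volume L') + (ε / 2 + ε / 2) := by ring
    _ = (volume U + volume V) + ε := by rw [hvolU, hvolV, ENNReal.add_halves]
    _ ≤ volume (B - C) + ε := add_le_add_left key _


lemma lintegral_tail {α : Type*} [MeasurableSpace α] (μ : Measure α) [SigmaFinite μ]
    (h : α → ℝ≥0∞) (hmh : Measurable h) (c : ℝ) (hc : 0 < c) :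
    ∫⁻ t in Ioi (0:ℝ), μ {x | ENNReal.ofReal (t / c) < h x} =
      ENNReal.ofReal c * ∫⁻ x, h x ∂μ := by
  set F : ℝ → α → ℝ≥0∞ := fun t x =>
    Set.indicator {x : α | ENNReal.ofReal (t / c) < h x} 1 x with hF
  have hsetm : MeasurableSet {p : ℝ × α | ENNReal.ofReal (p.1 / c) < h p.2} :=
    measurableSet_lt ((ENNReal.measurable_ofReal.comp (measurable_fst.div_const c)))
      (hmh.comp measurable_snd)
  have huncurry : (Function.uncurry F) =
      Set.indicator {p : ℝ × α | ENNReal.ofReal (p.1 / c) < h p.2} 1 := by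
    funext p
    simp only [Function.uncurry, hF, Set.indicator_apply, Set.mem_setOf_eq, Pi.one_apply]
  have hFm : AEMeasurable (Function.uncurry F)
      ((volume.restrict (Ioi (0:ℝ))).prod μ) := by
    rw [huncurry]
    exact ((measurable_const.indicator hsetm)).aemeasurable
  have hslicem : ∀ t : ℝ, MeasurableSet {x : α | ENNReal.ofReal (t / c) < h x} :=
    fun t => measurableSet_lt measurable_const hmh
  have hslicem2 : ∀ x : α, MeasurableSet {t : ℝ | ENNReal.ofReal (t / c) < h x} :=
    fun x => measurableSet_lt (ENNReal.measurable_ofReal.comp (measurable_id.div_const c))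
      measurable_const
  calc ∫⁻ t in Ioi (0:ℝ), μ {x | ENNReal.ofReal (t / c) < h x}
      = ∫⁻ t in Ioi (0:ℝ), (∫⁻ x, F t x ∂μ) := by
        refine lintegral_congr fun t => ?_
        rw [hF]
        exact (lintegral_indicator_one (hslicem t)).symm
    _ = ∫⁻ x, (∫⁻ t in Ioi (0:ℝ), F t x) ∂μ := lintegral_lintegral_swap hFm
    _ = ∫⁻ x, ENNReal.ofReal c * h x ∂μ := by
        refine lintegral_congr fun x => ?_
        have h1 : (fun t : ℝ => F t x) =
            Set.indicator {t : ℝ | ENNReal.ofReal (t / c) < h x} 1 := by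
          funext t
          simp only [hF, Set.indicator_apply, Set.mem_setOf_eq, Pi.one_apply]
        rw [h1, lintegral_indicator_one (hslicem2 x), Measure.restrict_apply (hslicem2 x)]
        rcases eq_or_ne (h x) ∞ with hx | hx
        · have : {t : ℝ | ENNReal.ofReal (t / c) < h x} = univ := by
            ext t; simp [hx]
          rw [this, univ_inter, hx, Real.volume_Ioi,
            ENNReal.mul_top (by simp [ENNReal.ofReal_eq_zero, hc.not_ge])]
        · have hint : {t : ℝ | ENNReal.ofReal (t / c) < h x} ∩ Ioi 0
              = Ioo 0 (c * (h x).toReal) := by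
            ext t
            simp only [mem_inter_iff, mem_setOf_eq, mem_Ioi, mem_Ioo]
            constructor
            · rintro ⟨hlt, ht0⟩
              refine ⟨ht0, ?_⟩
              have := (ENNReal.ofReal_lt_iff_lt_toReal (by positivity) hx).mp hlt
              rw [div_lt_iff₀ hc] at this
              linarith
            · rintro ⟨ht0, htc⟩
              refine ⟨?_, ht0⟩
              rw [ENNReal.ofReal_lt_iff_lt_toReal (by positivity) hx, div_lt_iff₀ hc]
              linarith
          rw [hint, Real.volume_Ioo, sub_zero, ENNReal.ofReal_mul hc.le,
            ENNReal.ofReal_toReal hx]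
    _ = ENNReal.ofReal c * ∫⁻ x, h x ∂μ := lintegral_const_mul _ hmh

lemma planar_sub (T : Set (ℝ × ℝ)) (hne : T.Nonempty) (hm : MeasurableSet T) :
    4 * volume T ≤ volume (T - T) := by
  obtain ⟨t₀, ht₀⟩ := hne
  rcases eq_or_ne (volume T) ∞ with hinf | hfin
  · have hsub : (fun x => x + t₀) ⁻¹' T ⊆ T - T := fun x hx =>
      ⟨x + t₀, hx, t₀, ht₀, by simp⟩
    have hv : volume ((fun x => x + t₀) ⁻¹' T) = volume T :=
      measure_preimage_add_right volume t₀ T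
    have : (⊤ : ℝ≥0∞) ≤ volume (T - T) := by
      rw [← hinf, ← hv]; exact measure_mono hsub
    exact le_trans le_top this
  set D := T - T with hDdef
  set D' := toMeasurable volume D with hD'
  have hD'm : MeasurableSet D' := measurableSet_toMeasurable _ _
  have hDD' : D ⊆ D' := subset_toMeasurable _ _
  have hvolD : volume D = volume D' := (measure_toMeasurable D).symm
  set f : ℝ → ℝ≥0∞ := fun x => volume (Prod.mk x ⁻¹' T) with hf
  set g : ℝ → ℝ≥0∞ := fun x => volume (Prod.mk x ⁻¹' D') with hg
  have hfm : Measurable f := measurable_measure_prodMk_left hm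
  have hgm : Measurable g := measurable_measure_prodMk_left hD'm
  have hT : volume T = ∫⁻ x, f x := by
    rw [Measure.volume_eq_prod, Measure.prod_apply hm]
  have hD : volume D' = ∫⁻ x, g x := by
    rw [Measure.volume_eq_prod, Measure.prod_apply hD'm]
  have key : ∀ t : ℝ, t ∈ Ioi (0:ℝ) →
      2 * volume {x : ℝ | ENNReal.ofReal (t / 2) < f x}
        ≤ volume {u : ℝ | ENNReal.ofReal (t / 1) < g u} := by
    intro t ht
    rw [mem_Ioi] at ht
    set Ft := {x : ℝ | ENNReal.ofReal (t / 2) < f x} with hFt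
    rcases Ft.eq_empty_or_nonempty with he | hne'
    · rw [he]; simp
    have hFtm : MeasurableSet Ft := measurableSet_lt measurable_const hfm
    have hslice : ∀ x : ℝ, x ∈ Ft → (Prod.mk x ⁻¹' T).Nonempty := by
      intro x hx
      rw [hFt, mem_setOf_eq] at hx
      have hpos : (0:ℝ≥0∞) < f x :=
        lt_of_le_of_lt (zero_le) hx
      exact nonempty_of_measure_ne_zero hpos.ne'
    have hsub : Ft - Ft ⊆ {u : ℝ | ENNReal.ofReal (t / 1) < g u} := by
      rintro u ⟨x₁, hx₁, x₂, hx₂, rfl⟩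
      have hslm : ∀ x : ℝ, MeasurableSet (Prod.mk x ⁻¹' T) := fun x =>
        hm.preimage measurable_prodMk_left
      have hsl : (Prod.mk x₁ ⁻¹' T) - (Prod.mk x₂ ⁻¹' T) ⊆ Prod.mk (x₁ - x₂) ⁻¹' D' := by
        rintro v ⟨b, hb, c, hc, rfl⟩
        exact hDD' ⟨(x₁, b), hb, (x₂, c), hc, rfl⟩
      have hlt : ENNReal.ofReal t < g (x₁ - x₂) := by
        calc ENNReal.ofReal t = ENNReal.ofReal (t/2) + ENNReal.ofReal (t/2) := by
              rw [← ENNReal.ofReal_add (by positivity) (by positivity)]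
              norm_num
          _ < f x₁ + f x₂ := ENNReal.add_lt_add hx₁ hx₂
          _ ≤ volume ((Prod.mk x₁ ⁻¹' T) - (Prod.mk x₂ ⁻¹' T)) :=
              one_dim_sub _ _ (hslm x₁) (hslm x₂) (hslice x₁ hx₁) (hslice x₂ hx₂)
          _ ≤ g (x₁ - x₂) := measure_mono hsl
      simpa [div_one] using hlt
    calc 2 * volume Ft = volume Ft + volume Ft := two_mul _
      _ ≤ volume (Ft - Ft) := one_dim_sub _ _ hFtm hFtm hne' hne'
      _ ≤ volume {u : ℝ | ENNReal.ofReal (t / 1) < g u} := measure_mono hsub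
  calc 4 * volume T = 2 * (ENNReal.ofReal 2 * ∫⁻ x, f x) := by
        rw [← hT]
        norm_num [ENNReal.ofReal_ofNat]
        ring
    _ = 2 * ∫⁻ t in Ioi (0:ℝ), volume {x | ENNReal.ofReal (t / 2) < f x} := by
        rw [lintegral_tail volume f hfm 2 two_pos]
    _ = ∫⁻ t in Ioi (0:ℝ), 2 * volume {x | ENNReal.ofReal (t / 2) < f x} :=
        (lintegral_const_mul' 2 _ (by norm_num)).symm
    _ ≤ ∫⁻ t in Ioi (0:ℝ), volume {u | ENNReal.ofReal (t / 1) < g u} :=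
        lintegral_mono_ae ((ae_restrict_iff' measurableSet_Ioi).2 (ae_of_all _ key))
    _ = ENNReal.ofReal 1 * ∫⁻ u, g u := lintegral_tail volume g hgm 1 one_pos
    _ = volume D' := by rw [ENNReal.ofReal_one, one_mul, hD]
    _ = volume (T - T) := hvolD.symm

theorem four_mul_volume_le_volume_diff (S : Set (EuclideanSpace ℝ (Fin 2)))
    (hne : S.Nonempty) (hm : MeasurableSet S) :
    4 * volume S ≤ volume (S - S) := by
  set e : EuclideanSpace ℝ (Fin 2) ≃ᵐ ℝ × ℝ :=
    (MeasurableEquiv.toLp 2 (Fin 2 → ℝ)).symm.trans (MeasurableEquiv.finTwoArrow) with he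
  have hp : MeasurePreserving e volume volume :=
    (volume_preserving_finTwoArrow ℝ).comp
      (EuclideanSpace.volume_preserving_symm_measurableEquiv_toLp (Fin 2))
  have hvol : ∀ A : Set (EuclideanSpace ℝ (Fin 2)), volume (e '' A) = volume A := by
    intro A
    have h1 : e '' A = e.symm ⁻¹' A := by
      ext y
      constructor
      · rintro ⟨x, hx, rfl⟩; simpa using hx
      · intro hy; exact ⟨e.symm y, hy, e.apply_symm_apply y⟩
    rw [h1, ← MeasurableEquiv.map_apply e.symm, (hp.symm e).map_eq]
  have hadd : ∀ a b : EuclideanSpace ℝ (Fin 2), e (a - b) = e a - e b := fun a b => rfl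
  have himg : e '' (S - S) = e '' S - e '' S := by
    ext y; constructor
    · rintro ⟨x, ⟨a, ha, b, hb, rfl⟩, rfl⟩
      exact ⟨e a, ⟨a, ha, rfl⟩, e b, ⟨b, hb, rfl⟩, (hadd a b).symm⟩
    · rintro ⟨u, ⟨a, ha, rfl⟩, v, ⟨b, hb, rfl⟩, rfl⟩
      exact ⟨a - b, ⟨a, ha, b, hb, rfl⟩, hadd a b⟩
  have hmi : MeasurableSet (e '' S) := by
    have h1 : e '' S = e.symm ⁻¹' S := by
      ext y
      constructor
      · rintro ⟨x, hx, rfl⟩; simpa using hx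
      · intro hy; exact ⟨e.symm y, hy, e.apply_symm_apply y⟩
    rw [h1]; exact e.symm.measurable hm
  calc 4 * volume S = 4 * volume (e '' S) := by rw [hvol]
    _ ≤ volume (e '' S - e '' S) := planar_sub _ (hne.image e) hmi
    _ = volume (e '' (S - S)) := by rw [himg]
    _ = volume (S - S) := hvol _
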